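/- If ψ : ℕ → ℝ≥0 satisfies ∑_{q=1}^∞ (φ(q)ψ(q)/q) < ∞, where φ is the Euler totient function, then the set A'(ψ) = {x ∈ [0,1] : |x - p/q| < ψ(q)/q for infinitely many coprime pairs (p,q)} has Lebesgue measure zero. -/

import Mathlib

open Set MeasureTheory Metric Filter Topology ENNReal NNReal

noncomputable section

/-- The limsup of a sequence of sets: points belonging to infinitely many of them. -/
def limsupSet {X : Type*} (A : ℕ → Set X) : Set X :=
  ⋂ N, ⋃ n, ⋃ (_ : N ≤ n), A n

/-- `s`-dimensional Hausdorff content, via covers by countably many closed balls. -/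
def hContent {X : Type*} [PseudoMetricSpace X] (s : ℝ) (E : Set X) : ℝ≥0∞ :=
  ⨅ (c : ℕ → X) (r : ℕ → ℝ) (_ : ∀ n, 0 ≤ r n)
    (_ : E ⊆ ⋃ n, Metric.closedBall (c n) (r n)),
    ∑' n, ENNReal.ofReal (r n ^ s)

/-- A dimension function: continuous on `(0,∞)`, positive, tending to `0` at `0`. -/
def IsDimFun (f : ℝ → ℝ) : Prop :=
  ContinuousOn f (Set.Ioi 0) ∧ (∀ r > 0, 0 < f r) ∧
    Filter.Tendsto f (nhdsWithin 0 (Set.Ioi 0)) (nhds 0)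

/-- The `ρ`-approximate Hausdorff `f`-measure. -/
def preHausdorffF {X : Type*} [PseudoMetricSpace X] (f : ℝ → ℝ) (ρ : ℝ) (F : Set X) : ℝ≥0∞ :=
  ⨅ (c : ℕ → X) (r : ℕ → ℝ) (_ : ∀ n, 0 < r n ∧ r n < ρ)
    (_ : F ⊆ ⋃ n, Metric.ball (c n) (r n)),
    ∑' n, ENNReal.ofReal (f (r n))

/-- The Hausdorff `f`-measure, obtained as `ρ → 0` (equivalently, the supremum over `ρ > 0`). -/
def hausdorffF {X : Type*} [PseudoMetricSpace X] (f : ℝ → ℝ) (F : Set X) : ℝ≥0∞ :=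
  ⨆ (ρ : ℝ) (_ : 0 < ρ), preHausdorffF f ρ F

end

lemma count_aux (q : ℕ) (hq : 1 ≤ q) :
    ((Finset.Icc (-(q:ℤ)) (2*q)).filter (fun p => Int.gcd p q = 1)).card
      ≤ 4 * q.totient := by
  have hq0 : (0:ℤ) < q := by exact_mod_cast hq
  have hqne : (q:ℤ) ≠ 0 := hq0.ne'
  have hcard : ((Finset.Icc (-1:ℤ) 2) ×ˢ ((Finset.range q).filter q.Coprime)).card
      = 4 * q.totient := by
    rw [Finset.card_product, Int.card_Icc, Nat.totient]
    rfl
  rw [← hcard]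
  apply Finset.card_le_card_of_injOn (fun p => (p / (q:ℤ), (p % (q:ℤ)).toNat))
  · intro p hp
    rw [Finset.mem_coe, Finset.mem_filter, Finset.mem_Icc] at hp
    obtain ⟨⟨hp1, hp2⟩, hp3⟩ := hp
    have hmod0 : 0 ≤ p % (q:ℤ) := Int.emod_nonneg p hqne
    have hmodq : p % (q:ℤ) < q := Int.emod_lt_of_pos p hq0
    rw [Finset.mem_coe, Finset.mem_product, Finset.mem_Icc, Finset.mem_filter, Finset.mem_range]
    refine ⟨⟨?_, ?_⟩, ?_, ?_⟩
    · have : (-1 : ℤ) * q / q ≤ p / q := Int.ediv_le_ediv hq0 (by linarith)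
      rwa [Int.mul_ediv_cancel _ hqne] at this
    · have : p / (q:ℤ) ≤ 2 * q / q := Int.ediv_le_ediv hq0 hp2
      rwa [Int.mul_ediv_cancel _ hqne] at this
    · dsimp only
      omega
    · -- coprimality of residue
      have h1 : IsCoprime p (q:ℤ) := Int.isCoprime_iff_gcd_eq_one.2 hp3
      have h2 : IsCoprime (p % (q:ℤ)) q := by
        have := h1.add_mul_left_left (-(p / q))
        rwa [Int.emod_def, sub_eq_add_neg, ← mul_neg]
      have h3 := Int.isCoprime_iff_gcd_eq_one.1 h2
      have e1 : (p % (q:ℤ)).natAbs = (p % q).toNat := by omega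
      have e2 : ((q:ℤ)).natAbs = q := by omega
      rw [Int.gcd, e1, e2] at h3
      exact (Nat.coprime_comm).1 h3
  · intro p1 _ p2 _ h
    have h1 : p1 / (q:ℤ) = p2 / q := congrArg Prod.fst h
    have h2' : (p1 % (q:ℤ)).toNat = (p2 % (q:ℤ)).toNat := congrArg Prod.snd h
    have hn1 : 0 ≤ p1 % (q:ℤ) := Int.emod_nonneg p1 hqne
    have hn2 : 0 ≤ p2 % (q:ℤ) := Int.emod_nonneg p2 hqne
    have h2 : p1 % (q:ℤ) = p2 % q := by omega
    calc p1 = (q:ℤ) * (p1 / q) + p1 % q := (Int.mul_ediv_add_emod p1 q).symm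
    _ = (q:ℤ) * (p2 / q) + p2 % q := by rw [h1, h2]
    _ = p2 := Int.mul_ediv_add_emod p2 q

lemma measure_aux (ψ : ℕ → ℝ) (hψ : ∀ q, 0 ≤ ψ q) (q : ℕ) (hq : 1 ≤ q) (hψq : ψ q ≤ q) :
    MeasureTheory.volume
      {x ∈ Set.Icc (0:ℝ) 1 | ∃ p : ℤ, Int.gcd p q = 1 ∧ |x - (p:ℝ)/q| < ψ q / q}
      ≤ ENNReal.ofReal (8 * ((q.totient : ℝ) * ψ q / q)) := by
  have hq0 : (0:ℝ) < q := by exact_mod_cast hq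
  have hr0 : 0 ≤ ψ q / q := div_nonneg (hψ q) hq0.le
  have hr1 : ψ q / q ≤ 1 := (div_le_one hq0).2 hψq
  set T : Finset ℤ := (Finset.Icc (-(q:ℤ)) (2*q)).filter (fun p => Int.gcd p q = 1) with hT
  have hsub : {x ∈ Set.Icc (0:ℝ) 1 | ∃ p : ℤ, Int.gcd p q = 1 ∧ |x - (p:ℝ)/q| < ψ q / q}
      ⊆ ⋃ p ∈ T, Metric.closedBall ((p:ℝ)/q) (ψ q / q) := by
    rintro x ⟨⟨hx0, hx1⟩, p, hpg, hpx⟩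
    have habs := abs_lt.1 hpx
    have hplt : (p:ℝ) < 2 * q := by
      have hd : (p:ℝ)/q < 2 := by linarith [habs.1]
      have := (div_lt_iff₀ hq0).1 hd
      linarith
    have hpgt : -(q:ℝ) < p := by
      have hd : -1 < (p:ℝ)/q := by linarith [habs.2]
      have := (lt_div_iff₀ hq0).1 hd
      linarith
    have hpmem : p ∈ T := by
      rw [hT, Finset.mem_filter, Finset.mem_Icc]
      refine ⟨⟨?_, ?_⟩, hpg⟩
      · have : -(q:ℤ) < p := by exact_mod_cast hpgt
        omega
      · have : p < 2 * (q:ℤ) := by exact_mod_cast hplt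
        omega
    exact Set.mem_biUnion hpmem (Metric.mem_closedBall.2 (by
      rw [Real.dist_eq]; exact hpx.le))
  calc MeasureTheory.volume _ ≤ MeasureTheory.volume (⋃ p ∈ T, Metric.closedBall ((p:ℝ)/q) (ψ q / q)) :=
        measure_mono hsub
    _ ≤ ∑ p ∈ T, MeasureTheory.volume (Metric.closedBall ((p:ℝ)/q) (ψ q / q)) :=
        measure_biUnion_finset_le T _
    _ = (T.card : ℝ≥0∞) * ENNReal.ofReal (2 * (ψ q / q)) := by
        simp [Real.volume_closedBall, Finset.sum_const, nsmul_eq_mul]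
    _ ≤ ((4 * q.totient : ℕ) : ℝ≥0∞) * ENNReal.ofReal (2 * (ψ q / q)) := by
        gcongr
        exact_mod_cast count_aux q hq
    _ = ENNReal.ofReal (((4 * q.totient : ℕ) : ℝ) * (2 * (ψ q / q))) := by
        rw [← ENNReal.ofReal_natCast (4 * q.totient), ← ENNReal.ofReal_mul (by positivity)]
    _ = ENNReal.ofReal (8 * ((q.totient : ℝ) * ψ q / q)) := by
        congr 1
        push_cast
        ring

/-- Convergence part of the Duffin–Schaeffer conjecture. -/
theorem stmt1 (ψ : ℕ → ℝ) (hψ : ∀ q, 0 ≤ ψ q)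
    (hsum : Summable fun q : ℕ => (Nat.totient q : ℝ) * ψ q / q) :
    MeasureTheory.volume
      {x ∈ Set.Icc (0 : ℝ) 1 |
        {pq : ℤ × ℕ | 1 ≤ pq.2 ∧ Int.gcd pq.1 pq.2 = 1 ∧
          |x - (pq.1 : ℝ) / (pq.2 : ℝ)| < ψ pq.2 / pq.2}.Infinite} = 0 := by
  -- eventual smallness
  have htend := hsum.tendsto_atTop_zero
  have hev : ∀ᶠ q in atTop, (Nat.totient q : ℝ) * ψ q / q ≤ 1 :=
    (htend.eventually_lt_const one_pos).mono fun q hq => hq.le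
  obtain ⟨N, hN⟩ := eventually_atTop.1 hev
  set M := max N 1 with hM
  set s : ℕ → Set ℝ := fun q =>
    {x ∈ Set.Icc (0:ℝ) 1 | ∃ p : ℤ, Int.gcd p q = 1 ∧ |x - (p:ℝ)/q| < ψ q / q} with hs
  -- bound for large q
  have hψle : ∀ q, M ≤ q → ψ q ≤ q := by
    intro q hq
    have hq1 : 1 ≤ q := le_trans (le_max_right N 1) hq
    have hqN : N ≤ q := le_trans (le_max_left N 1) hq
    have h1 := hN q hqN
    have hq0 : (0:ℝ) < q := by exact_mod_cast hq1
    have hφ : (1:ℝ) ≤ q.totient := by exact_mod_cast Nat.totient_pos.2 hq1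
    have h2 : ψ q / q ≤ (Nat.totient q : ℝ) * ψ q / q := by
      apply (div_le_div_iff_of_pos_right hq0).2
      nlinarith [hψ q]
    have := h2.trans h1
    rw [div_le_one hq0] at this
    exact this
  have hbig : ∀ q, M ≤ q → MeasureTheory.volume (s q)
      ≤ ENNReal.ofReal (8 * ((q.totient : ℝ) * ψ q / q)) := fun q hq =>
    measure_aux ψ hψ q (le_trans (le_max_right N 1) hq) (hψle q hq)
  have hle1 : ∀ q, MeasureTheory.volume (s q) ≤ 1 := by
    intro q
    calc MeasureTheory.volume (s q) ≤ MeasureTheory.volume (Set.Icc (0:ℝ) 1) :=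
          measure_mono (sep_subset _ _)
      _ = 1 := by rw [Real.volume_Icc]; norm_num
  -- summability of measures
  have htsum : (∑' q, MeasureTheory.volume (s q)) ≠ ∞ := by
    rw [← lt_top_iff_ne_top]
    have hpt : ∀ q, MeasureTheory.volume (s q)
        ≤ (if q < M then (1:ℝ≥0∞) else 0) + ENNReal.ofReal (8 * ((q.totient : ℝ) * ψ q / q)) := by
      intro q
      by_cases h : q < M
      · simp only [h, if_pos]
        exact le_trans (hle1 q) le_self_add
      · simp only [h, if_neg, not_false_iff, zero_add]
        exact hbig q (not_lt.1 h)
    have hsum8 : Summable (fun q => 8 * ((Nat.totient q : ℝ) * ψ q / q)) := hsum.mul_left 8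
    have hnn : ∀ q, 0 ≤ 8 * ((Nat.totient q : ℝ) * ψ q / q) := fun q =>
      mul_nonneg (by norm_num)
        (div_nonneg (mul_nonneg (Nat.cast_nonneg _) (hψ q)) (Nat.cast_nonneg _))
    calc (∑' q, MeasureTheory.volume (s q))
        ≤ ∑' q, ((if q < M then (1:ℝ≥0∞) else 0) + ENNReal.ofReal (8 * ((q.totient : ℝ) * ψ q / q))) :=
          ENNReal.tsum_le_tsum hpt
      _ = (∑' q, (if q < M then (1:ℝ≥0∞) else 0))
          + ∑' q, ENNReal.ofReal (8 * ((q.totient : ℝ) * ψ q / q)) := ENNReal.tsum_add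
      _ < ∞ := by
          apply ENNReal.add_lt_top.2
          constructor
          · have : (∑' q, (if q < M then (1:ℝ≥0∞) else 0)) = ∑ q ∈ Finset.range M, (if q < M then (1:ℝ≥0∞) else 0) := by
              apply tsum_eq_sum
              intro q hq
              rw [Finset.mem_range] at hq
              simp [hq]
            rw [this]
            refine lt_of_le_of_lt (Finset.sum_le_card_nsmul _ _ 1 (fun _ _ => by split <;> simp)) ?_
            simp only [Finset.card_range, nsmul_eq_mul, mul_one]
            exact ENNReal.natCast_lt_top M
          · rw [← ENNReal.ofReal_tsum_of_nonneg hnn hsum8]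
            exact ENNReal.ofReal_lt_top
  -- inclusion in limsup
  have hincl : {x ∈ Set.Icc (0 : ℝ) 1 |
        {pq : ℤ × ℕ | 1 ≤ pq.2 ∧ Int.gcd pq.1 pq.2 = 1 ∧
          |x - (pq.1 : ℝ) / (pq.2 : ℝ)| < ψ pq.2 / pq.2}.Infinite} ⊆ limsup s atTop := by
    rintro x ⟨hx1, hx2⟩
    rw [mem_limsup_iff_frequently_mem, frequently_atTop]
    intro a
    by_contra hcon
    push_neg at hcon
    apply hx2
    -- each fiber is finite
    have hfib : ∀ q : ℕ, ({p : ℤ | |x - (p:ℝ)/q| < ψ q / q}).Finite := by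
      intro q
      rcases Nat.eq_zero_or_pos q with rfl | hq
      · convert Set.finite_empty
        ext p
        simp only [Set.mem_setOf_eq, Set.mem_empty_iff_false, iff_false, not_lt]
        push_cast
        simp [div_nonneg, abs_nonneg]
      · have hq0 : (0:ℝ) < q := by exact_mod_cast hq
        apply Set.Finite.subset (Set.finite_Icc (-(⌈(q:ℝ) + ψ q⌉)) ⌈(q:ℝ) + ψ q⌉)
        intro p hp
        simp only [Set.mem_setOf_eq] at hp
        have habs := abs_lt.1 hp
        have hx0 := hx1.1
        have hx1' := hx1.2
        have hexp : ψ q / q * q = ψ q := div_mul_cancel₀ _ hq0.ne'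
        have h1 : (p:ℝ) < x * q + ψ q := by
          have hlt : (p:ℝ)/q < x + ψ q / q := by linarith [habs.1]
          have := (div_lt_iff₀ hq0).1 hlt
          nlinarith [this, hexp]
        have h2 : -(x * q + ψ q) < (p:ℝ) := by
          have hlt : x - ψ q / q < (p:ℝ)/q := by linarith [habs.2]
          have := (lt_div_iff₀ hq0).1 hlt
          nlinarith [this, hexp]
        have hb : |(p:ℝ)| ≤ (q:ℝ) + ψ q := by
          rw [abs_le]
          constructor <;> nlinarith
        have hceil : ((q:ℝ) + ψ q) ≤ (⌈(q:ℝ) + ψ q⌉ : ℝ) := Int.le_ceil _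
        rw [Set.mem_Icc]
        constructor
        · have : -((⌈(q:ℝ) + ψ q⌉ : ℝ)) ≤ (p:ℝ) := by
            have := abs_le.1 (hb.trans hceil)
            exact this.1
          exact_mod_cast this
        · have : (p:ℝ) ≤ ((⌈(q:ℝ) + ψ q⌉ : ℝ)) := (abs_le.1 (hb.trans hceil)).2
          exact_mod_cast this
    apply Set.Finite.subset
      (Set.Finite.biUnion (Set.finite_Iio a)
        (fun q _ => ((hfib q).prod (Set.finite_singleton q))))
    rintro ⟨p, q⟩ ⟨hq1, hpg, hpx⟩
    have hqa : q < a := by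
      by_contra hqa
      push_neg at hqa
      exact hcon q hqa ⟨hx1, p, hpg, hpx⟩
    exact Set.mem_biUnion hqa ⟨hpx, rfl⟩
  exact measure_mono_null hincl (MeasureTheory.measure_limsup_atTop_eq_zero htsum)
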